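/- Let μ be a Radon measure on ℝⁿ, p a point, and suppose the upper density bound μ(B_r(p)) ≤ Λ r^{n−2} holds for all r ∈ (0, r₀]. Suppose moreover that the averaged Gaussian density Θ̃(r) := (4π r²)^{-(n-2)/2} ∫ e^{-|x−p|²/(4r²)} dμ(x) has a limit θ as r → 0, with θ ≥ c > 0. Then the Euclidean lower density is bounded below: liminf_{r→0} μ(B_r(p)) / r^{n−2} ≥ c', for some c' > 0 depending only on n, Λ, c. -/

import Mathlib

open MeasureTheory Filter Real

private lemma aux_pow_le_exp (y : ℝ) (hy : 0 ≤ y) (m : ℕ) : (y / m) ^ m ≤ Real.exp y := by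
  rcases Nat.eq_zero_or_pos m with h | h
  · simp [h, Real.exp_pos y, (Real.exp_pos y).le, Real.one_le_exp hy]
  · have hm : (0:ℝ) < m := by exact_mod_cast h
    have h0 : 0 ≤ y / m := div_nonneg hy hm.le
    calc (y/m)^m ≤ (Real.exp (y/m))^m :=
          pow_le_pow_left₀ h0 (le_trans (by linarith) (Real.add_one_le_exp _)) m
    _ = Real.exp ((m:ℝ) * (y/m)) := (Real.exp_nat_mul _ m).symm
    _ = Real.exp y := by congr 1; field_simp

private lemma aux_exp_neg_le (y : ℝ) (hy : 0 < y) (m : ℕ) :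
    Real.exp (-y) ≤ ((m:ℝ) / y) ^ m := by
  rw [Real.exp_neg]
  have h1 : (0:ℝ) < (y/m)^m := by
    rcases Nat.eq_zero_or_pos m with h | h
    · simp [h]
    · have hm : (0:ℝ) < m := by exact_mod_cast h
      positivity
  have h2 : ((m:ℝ)/y)^m = ((y/(m:ℝ))^m)⁻¹ := by
    rw [← inv_pow, inv_div]
  rw [h2]
  exact inv_anti₀ h1 (aux_pow_le_exp y hy.le m)

private lemma aux_geom (K : ℝ) (m : ℕ) (hK : (m:ℝ) + 2 ≤ K) (j : ℕ) :
    (2:ℝ) ^ (j * m) * Real.exp (-(4 ^ j * K ^ 2 / 4)) ≤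
      Real.exp (-(K ^ 2 / 4)) * (1/2) ^ j := by
  have hm0 : (0:ℝ) ≤ m := Nat.cast_nonneg m
  have hK2 : (0:ℝ) < K := by linarith
  have ha : (m:ℝ) + 1 ≤ K^2/4 := by nlinarith
  have h4j : (1:ℝ) + 3*j ≤ 4^j := by
    have := one_add_mul_le_pow (a := (3:ℝ)) (by norm_num) j
    calc (1:ℝ) + 3*j = 1 + (j:ℝ)*3 := by ring
    _ ≤ (1+3)^j := this
    _ = 4^j := by norm_num
  have key : (2:ℝ)^(j*(m+1)) ≤ Real.exp ((4^j - 1) * (K^2/4)) := by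
    calc (2:ℝ)^(j*(m+1)) ≤ (Real.exp 1)^(j*(m+1)) := by
          apply pow_le_pow_left₀ (by norm_num)
          have := Real.exp_one_gt_d9; linarith
    _ = Real.exp ((j*(m+1) : ℕ)) := by rw [← Real.exp_nat_mul]; norm_num
    _ ≤ Real.exp ((4^j - 1) * (K^2/4)) := by
          apply Real.exp_le_exp.mpr
          push_cast
          have hj0 : (0:ℝ) ≤ (j:ℝ) := Nat.cast_nonneg j
          nlinarith [mul_le_mul_of_nonneg_left ha (by positivity : (0:ℝ) ≤ 3*(j:ℝ))]
  have expand : Real.exp (-(4 ^ j * K ^ 2 / 4)) =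
      Real.exp (-(K^2/4)) * Real.exp (-((4^j - 1) * (K^2/4))) := by
    rw [← Real.exp_add]; congr 1; ring
  have h2 : (2:ℝ)^(j*m) * (2:ℝ)^j = 2^(j*(m+1)) := by
    rw [← pow_add, Nat.mul_succ]
  have final : (2:ℝ)^(j*m) * Real.exp (-(4^j*K^2/4)) * 2^j ≤ Real.exp (-(K^2/4)) := by
    rw [expand]
    have hle1 : (2:ℝ)^(j*m) * 2^j * Real.exp (-((4^j-1)*(K^2/4))) ≤ 1 := by
      rw [h2]
      calc (2:ℝ)^(j*(m+1)) * Real.exp (-((4^j-1)*(K^2/4)))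
          ≤ Real.exp ((4^j-1)*(K^2/4)) * Real.exp (-((4^j-1)*(K^2/4))) :=
            mul_le_mul_of_nonneg_right key (Real.exp_pos _).le
      _ = 1 := by rw [← Real.exp_add]; simp
    nlinarith [Real.exp_pos (-(K^2/4)), Real.exp_pos (-((4^j-1)*(K^2/4))),
      pow_pos (two_pos (α := ℝ)) (j*m), pow_pos (two_pos (α := ℝ)) j]
  have h2j : (0:ℝ) < 2^j := by positivity
  calc (2:ℝ)^(j*m) * Real.exp (-(4^j*K^2/4))
      = ((2:ℝ)^(j*m) * Real.exp (-(4^j*K^2/4)) * 2^j) * (1/2)^j := by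
        rw [div_pow, one_pow]; field_simp
  _ ≤ Real.exp (-(K^2/4)) * (1/2)^j :=
      mul_le_mul_of_nonneg_right final (by positivity)

private lemma aux_K (n m : ℕ) (hn : 3 ≤ n) (Λ c : ℝ) (hΛ : 0 < Λ) (hc : 0 < c) :
    ∃ K : ℝ, 1 ≤ K ∧ (n:ℝ) ≤ K ∧ Λ * (4*K)^m * Real.exp (-(K^2/4)) * 2 ≤ c/8 := by
  have h := tendsto_pow_mul_exp_neg_atTop_nhds_zero m
  have hε : (0:ℝ) < (c/8) / (Λ * 16^m * 2) := by positivity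
  have h2 : ∀ᶠ x in atTop, x ^ m * Real.exp (-x) < (c/8) / (Λ * 16^m * 2) :=
    h.eventually (gt_mem_nhds hε)
  obtain ⟨x₀, hx₀⟩ := h2.exists_forall_of_atTop
  set x := max x₀ (max 1 ((n:ℝ)^2)) with hx
  have hx1 : (1:ℝ) ≤ x := le_trans (le_max_left _ _) (le_max_right _ _)
  have hx0 : (0:ℝ) < x := by linarith
  refine ⟨2 * Real.sqrt x, ?_, ?_, ?_⟩
  · have : (1:ℝ) ≤ Real.sqrt x := by
      rw [show (1:ℝ) = Real.sqrt 1 from (Real.sqrt_one).symm]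
      exact Real.sqrt_le_sqrt hx1
    linarith
  · have h1 : ((n:ℝ)^2) ≤ x := le_trans (le_max_right _ _) (le_max_right _ _)
    have h2 : (n:ℝ) ≤ Real.sqrt x := by
      rw [show (n:ℝ) = Real.sqrt ((n:ℝ)^2) by rw [Real.sqrt_sq (Nat.cast_nonneg n)]]
      exact Real.sqrt_le_sqrt h1
    have hs : (0:ℝ) ≤ Real.sqrt x := Real.sqrt_nonneg x
    nlinarith
  · set K := 2 * Real.sqrt x with hK
    have hKsq : K^2/4 = x := by
      rw [hK, mul_pow, Real.sq_sqrt hx0.le]; ring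
    have hK1 : (1:ℝ) ≤ K := by
      have : (1:ℝ) ≤ Real.sqrt x := by
        rw [show (1:ℝ) = Real.sqrt 1 from (Real.sqrt_one).symm]
        exact Real.sqrt_le_sqrt hx1
      rw [hK]; linarith
    have hKm : (4*K)^m ≤ 16^m * x^m := by
      have h1 : 4*K ≤ 16 * x := by
        have h2 : K ≤ K^2 := by nlinarith
        rw [hK] at h2 ⊢
        nlinarith [Real.sq_sqrt hx0.le, Real.sqrt_nonneg x]
      calc (4*K)^m ≤ (16*x)^m := pow_le_pow_left₀ (by positivity) h1 m
      _ = 16^m * x^m := mul_pow _ _ _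
    have hxb : x^m * Real.exp (-x) < (c/8) / (Λ * 16^m * 2) := hx₀ x (le_max_left _ _)
    have hexp : (0:ℝ) < Real.exp (-x) := Real.exp_pos _
    rw [hKsq]
    have h3 : Λ * (4*K)^m * Real.exp (-x) * 2 ≤ Λ * (16^m * x^m) * Real.exp (-x) * 2 := by
      gcongr
    calc Λ * (4*K)^m * Real.exp (-x) * 2 ≤ Λ * (16^m * x^m) * Real.exp (-x) * 2 := h3
    _ = (Λ * 16^m * 2) * (x^m * Real.exp (-x)) := by ring
    _ ≤ (Λ * 16^m * 2) * ((c/8) / (Λ * 16^m * 2)) := by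
        apply mul_le_mul_of_nonneg_left hxb.le (by positivity)
    _ = c/8 := by field_simp
set_option maxHeartbeats 1600000

/-- If `μ(B_r(p)) ≤ Λ r^{n−2}` for small `r` and the averaged Gaussian density
`(4πr²)^{-(n-2)/2} ∫ e^{-|x−p|²/(4r²)} dμ` tends to a limit `θ ≥ c > 0` as `r → 0`,
then the Euclidean lower `(n−2)`-density at `p` is bounded below by a constant
`c' > 0` depending only on `n, Λ, c`. -/
theorem stmt12 (n : ℕ) (hn : 3 ≤ n) (Λ c : ℝ) (hΛ : 0 < Λ) (hc : 0 < c) :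
    ∃ c' : ℝ, 0 < c' ∧
      ∀ (μ : Measure (EuclideanSpace ℝ (Fin n))) (_ : IsFiniteMeasure μ)
        (p : EuclideanSpace ℝ (Fin n)) (r₀ : ℝ), 0 < r₀ →
        (∀ r ∈ Set.Ioc (0 : ℝ) r₀,
            μ (Metric.ball p r) ≤ ENNReal.ofReal (Λ * r ^ (n - 2))) →
        ∀ θ : ℝ, c ≤ θ →
          Tendsto (fun r : ℝ =>
              (4 * Real.pi * r ^ 2) ^ (-((n : ℝ) - 2) / 2) *
                ∫ x, Real.exp (-‖x - p‖ ^ 2 / (4 * r ^ 2)) ∂μ)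
            (nhdsWithin 0 (Set.Ioi 0)) (nhds θ) →
          ∃ r₁ : ℝ, 0 < r₁ ∧ ∀ r ∈ Set.Ioo (0 : ℝ) r₁,
            ENNReal.ofReal (c' * r ^ (n - 2)) ≤ μ (Metric.ball p r) := by
  classical
  set m := n - 2 with hmdef
  have hm1 : 1 ≤ m := by omega
  have hcast : ((n:ℝ) - 2) = (m:ℝ) := by
    rw [hmdef, Nat.cast_sub (by omega : 2 ≤ n)]; norm_num
  obtain ⟨K, hK1, hKn, hKb⟩ := aux_K n m hn Λ c hΛ hc
  have hK0 : (0:ℝ) < K := lt_of_lt_of_le one_pos hK1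
  have hKm2 : (m:ℝ) + 2 ≤ K := by
    have : (m:ℝ) + 2 = (n:ℝ) := by rw [← hcast]; ring
    linarith
  refine ⟨c/4/K^m, by positivity, ?_⟩
  intro μ hfin p r₀ hr₀ hball θ hθ hlim
  -- extract r₂ from the limit hypothesis
  have hev : ∀ᶠ r in nhdsWithin 0 (Set.Ioi 0),
      c/2 < (4 * Real.pi * r ^ 2) ^ (-((n : ℝ) - 2) / 2) *
        ∫ x, Real.exp (-‖x - p‖ ^ 2 / (4 * r ^ 2)) ∂μ :=
    hlim.eventually (eventually_gt_nhds (by linarith))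
  rw [eventually_nhdsWithin_iff, Metric.eventually_nhds_iff] at hev
  obtain ⟨r₂, hr₂0, hr₂⟩ := hev
  -- constants for the tail estimate
  set M := (μ Set.univ).toReal with hMdef
  have hM0 : (0:ℝ) ≤ M := ENNReal.toReal_nonneg
  set A := (M+1) * (4*(n:ℝ)/r₀^2)^n with hAdef
  have hA0 : (0:ℝ) < A := by positivity
  set r₃ := min 1 (c/(8*A)) with hr₃def
  have hr₃0 : (0:ℝ) < r₃ := lt_min one_pos (by positivity)
  have tail : ∀ r : ℝ, 0 < r → r < r₃ → M * Real.exp (-(r₀^2/(4*r^2))) ≤ c/8 * r^m := by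
    intro r hr hrr
    have hr1 : r ≤ 1 := le_of_lt (lt_of_lt_of_le hrr (min_le_left _ _))
    have hrc : r ≤ c/(8*A) := le_of_lt (lt_of_lt_of_le hrr (min_le_right _ _))
    have hy : (0:ℝ) < r₀^2/(4*r^2) := by positivity
    have h1 : Real.exp (-(r₀^2/(4*r^2))) ≤ ((n:ℝ) / (r₀^2/(4*r^2)))^n :=
      aux_exp_neg_le _ hy n
    have h2 : ((n:ℝ) / (r₀^2/(4*r^2)))^n = (4*(n:ℝ)/r₀^2)^n * (r^2)^n := by
      rw [← mul_pow]; congr 1; field_simp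
    have h3 : ((r:ℝ)^2)^n = r^(n+2) * r^m := by
      rw [← pow_mul, ← pow_add]; congr 1; omega
    have h4 : r^(n+2) ≤ r := by
      calc r^(n+2) ≤ r^1 := pow_le_pow_of_le_one hr.le hr1 (by omega)
      _ = r := pow_one r
    have hrm0 : (0:ℝ) ≤ r^m := by positivity
    have h5 : M * Real.exp (-(r₀^2/(4*r^2))) ≤ A * (r^(n+2) * r^m) := by
      calc M * Real.exp (-(r₀^2/(4*r^2))) ≤ M * ((4*(n:ℝ)/r₀^2)^n * (r^2)^n) := by
            rw [h2] at h1
            exact mul_le_mul_of_nonneg_left h1 hM0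
      _ ≤ (M+1) * ((4*(n:ℝ)/r₀^2)^n * (r^2)^n) := by
            have : (0:ℝ) ≤ (4*(n:ℝ)/r₀^2)^n * (r^2)^n := by positivity
            nlinarith
      _ = A * (r^(n+2) * r^m) := by rw [hAdef, h3]; ring
    calc M * Real.exp (-(r₀^2/(4*r^2))) ≤ A * (r^(n+2) * r^m) := h5
    _ ≤ A * (r * r^m) := by
        apply mul_le_mul_of_nonneg_left _ hA0.le
        exact mul_le_mul_of_nonneg_right h4 hrm0
    _ = (A * r) * r^m := by ring
    _ ≤ c/8 * r^m := by
        apply mul_le_mul_of_nonneg_right _ hrm0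
        calc A * r ≤ A * (c/(8*A)) := mul_le_mul_of_nonneg_left hrc hA0.le
        _ = c/8 := by field_simp
  -- the main estimate
  have main : ∀ r : ℝ, 0 < r → r < min r₂ r₃ →
      ENNReal.ofReal (c/4 * r^m) ≤ μ (Metric.ball p (K*r)) := by
    intro r hr hrmin
    have hrr₂ : r < r₂ := lt_of_lt_of_le hrmin (min_le_left _ _)
    have hrr₃ : r < r₃ := lt_of_lt_of_le hrmin (min_le_right _ _)
    set g : EuclideanSpace ℝ (Fin n) → ℝ :=
      fun x => Real.exp (-‖x - p‖ ^ 2 / (4 * r ^ 2)) with hgdef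
    have hgc : Continuous g := by
      apply Real.continuous_exp.comp
      fun_prop
    have hg0 : ∀ x, 0 ≤ g x := fun x => (Real.exp_pos _).le
    have hg1 : ∀ x, g x ≤ 1 := by
      intro x
      rw [hgdef]
      simp only
      rw [show (1:ℝ) = Real.exp 0 from Real.exp_zero.symm]
      apply Real.exp_le_exp.mpr
      apply div_nonpos_of_nonpos_of_nonneg (neg_nonpos.mpr (by positivity)) (by positivity)
    -- lower bound on the integral
    have hF : c/2 < (4 * Real.pi * r ^ 2) ^ (-((n : ℝ) - 2) / 2) * ∫ x, g x ∂μ := by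
      apply hr₂ _ (Set.mem_Ioi.mpr hr)
      rw [Real.dist_eq, sub_zero, abs_of_pos hr]
      exact hrr₂
    have hB : (0:ℝ) < 4 * Real.pi * r^2 := by positivity
    set E := (4 * Real.pi * r ^ 2) ^ (((n:ℝ) - 2) / 2) with hEdef
    have hE0 : (0:ℝ) < E := Real.rpow_pos_of_pos hB _
    have hEneg : (4 * Real.pi * r ^ 2) ^ (-((n : ℝ) - 2) / 2) = E⁻¹ := by
      rw [hEdef, neg_div, Real.rpow_neg hB.le]
    have hEr : r^m ≤ E := by
      have hE_eq : E = (4*Real.pi)^((m:ℝ)/2) * ((r^2):ℝ)^((m:ℝ)/2) := by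
        rw [hEdef, hcast, Real.mul_rpow (by positivity) (by positivity)]
      have h1 : ((r:ℝ)^2)^((m:ℝ)/2) = r^m := by
        have h2 : ((2:ℕ):ℝ) * ((m:ℝ)/2) = ((m:ℕ):ℝ) := by push_cast; ring
        rw [← Real.rpow_natCast r 2, ← Real.rpow_mul hr.le, h2, Real.rpow_natCast]
      have h2 : (1:ℝ) ≤ (4*Real.pi)^((m:ℝ)/2) := by
        rw [show (1:ℝ) = (1:ℝ) ^ ((m:ℝ)/2) from (Real.one_rpow _).symm]
        exact Real.rpow_le_rpow zero_le_one (by nlinarith [Real.pi_gt_three]) (by positivity)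
      rw [hE_eq, h1]
      calc r^m = 1 * r^m := (one_mul _).symm
      _ ≤ (4*Real.pi)^((m:ℝ)/2) * r^m :=
        mul_le_mul_of_nonneg_right h2 (pow_nonneg hr.le m)
    have hX0 : (0:ℝ) ≤ ∫ x, g x ∂μ := integral_nonneg hg0
    have hX : c/2 * r^m ≤ ∫ x, g x ∂μ := by
      rw [hEneg] at hF
      have h1 : c/2 * E < ∫ x, g x ∂μ := by
        have h := mul_lt_mul_of_pos_right hF hE0
        rwa [mul_comm E⁻¹, mul_assoc, inv_mul_cancel₀ hE0.ne', mul_one] at h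
      nlinarith [pow_nonneg hr.le m]
    -- pass to lintegral
    set G : EuclideanSpace ℝ (Fin n) → ENNReal := fun x => ENNReal.ofReal (g x) with hGdef
    have hXL : ∫ x, g x ∂μ = (∫⁻ x, G x ∂μ).toReal :=
      integral_eq_lintegral_of_nonneg_ae (Filter.Eventually.of_forall hg0)
        hgc.aestronglyMeasurable
    have hG1 : ∀ x, G x ≤ 1 := fun x => ENNReal.ofReal_le_one.mpr (hg1 x)
    have hLfin : ∫⁻ x, G x ∂μ ≤ μ Set.univ := by
      calc ∫⁻ x, G x ∂μ ≤ ∫⁻ _, 1 ∂μ := lintegral_mono hG1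
      _ = μ Set.univ := lintegral_one
    have hLne : ∫⁻ x, G x ∂μ ≠ ⊤ := ne_top_of_le_ne_top (measure_ne_top μ _) hLfin
    have hL_lb : ENNReal.ofReal (c/2 * r^m) ≤ ∫⁻ x, G x ∂μ := by
      rw [hXL] at hX
      exact ENNReal.ofReal_le_of_le_toReal hX
    set B := Metric.ball p (K*r) with hBdef
    have hsplit : ∫⁻ x, G x ∂μ = (∫⁻ x in B, G x ∂μ) + ∫⁻ x in Bᶜ, G x ∂μ :=
      (lintegral_add_compl G measurableSet_ball).symm
    have hBle : ∫⁻ x in B, G x ∂μ ≤ μ B := by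
      calc ∫⁻ x in B, G x ∂μ ≤ ∫⁻ _ in B, 1 ∂μ :=
            setLIntegral_mono measurable_const (fun x _ => hG1 x)
      _ = 1 * μ B := setLIntegral_const B 1
      _ = μ B := one_mul _
    -- the annuli and the far tail
    set T : Set (EuclideanSpace ℝ (Fin n)) := {x | r₀ ≤ dist x p} with hTdef
    set Aset : ℕ → Set (EuclideanSpace ℝ (Fin n)) := fun j =>
      {x | 2^j * (K*r) ≤ dist x p} ∩ Metric.ball p (min r₀ (2^(j+2) * (K*r))) with hAsetdef
    have hKr : (0:ℝ) < K * r := by positivity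
    have hcover : Bᶜ ⊆ T ∪ ⋃ j, Aset j := by
      intro x hx
      rw [hBdef, Set.mem_compl_iff, Metric.mem_ball, not_lt] at hx
      by_cases hxr : r₀ ≤ dist x p
      · exact Or.inl hxr
      push_neg at hxr
      right
      have hex : ∃ j : ℕ, dist x p < 2^(j+1) * (K*r) := by
        obtain ⟨N, hN⟩ := pow_unbounded_of_one_lt (dist x p / (K*r)) (one_lt_two (α := ℝ))
        refine ⟨N, ?_⟩
        rw [div_lt_iff₀ hKr] at hN
        calc dist x p < 2^N * (K*r) := hN
        _ ≤ 2^(N+1) * (K*r) := by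
            apply mul_le_mul_of_nonneg_right _ hKr.le
            exact pow_le_pow_right₀ one_le_two (by omega)
      set j := Nat.find hex with hjdef
      have hj1 : dist x p < 2^(j+1) * (K*r) := Nat.find_spec hex
      have hj0 : 2^j * (K*r) ≤ dist x p := by
        rcases Nat.eq_zero_or_pos j with h | h
        · rw [h]; simpa using hx
        · have hmin := Nat.find_min hex (m := j-1) (by omega)
          push_neg at hmin
          calc (2:ℝ)^j * (K*r) = 2^((j-1)+1) * (K*r) := by congr 2; omega
          _ ≤ dist x p := hmin
      refine Set.mem_iUnion.mpr ⟨j, ⟨hj0, ?_⟩⟩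
      rw [Metric.mem_ball]
      refine lt_min hxr (lt_of_lt_of_le hj1 ?_)
      apply mul_le_mul_of_nonneg_right _ hKr.le
      exact pow_le_pow_right₀ one_le_two (by omega)
    -- tail estimate
    have hTle : ∫⁻ x in T, G x ∂μ ≤ ENNReal.ofReal (c/8 * r^m) := by
      have hb : ∀ x ∈ T, G x ≤ ENNReal.ofReal (Real.exp (-(r₀^2/(4*r^2)))) := by
        intro x hxT
        apply ENNReal.ofReal_le_ofReal
        apply Real.exp_le_exp.mpr
        have h1 : r₀ ≤ ‖x - p‖ := by rw [← dist_eq_norm]; exact hxT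
        have h2 : r₀^2 ≤ ‖x-p‖^2 := pow_le_pow_left₀ hr₀.le h1 2
        rw [neg_div]
        apply neg_le_neg
        gcongr
      calc ∫⁻ x in T, G x ∂μ
          ≤ ∫⁻ _ in T, ENNReal.ofReal (Real.exp (-(r₀^2/(4*r^2)))) ∂μ :=
            setLIntegral_mono measurable_const hb
      _ = ENNReal.ofReal (Real.exp (-(r₀^2/(4*r^2)))) * μ T := setLIntegral_const _ _
      _ ≤ ENNReal.ofReal (Real.exp (-(r₀^2/(4*r^2)))) * μ Set.univ :=
            mul_le_mul_right (measure_mono (Set.subset_univ T)) _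
      _ = ENNReal.ofReal (Real.exp (-(r₀^2/(4*r^2))) * M) := by
            rw [← ENNReal.ofReal_toReal (measure_ne_top μ Set.univ), ← hMdef,
              ← ENNReal.ofReal_mul (Real.exp_pos _).le]
      _ ≤ ENNReal.ofReal (c/8 * r^m) := by
            apply ENNReal.ofReal_le_ofReal
            have := tail r hr hrr₃
            linarith [this, mul_comm M (Real.exp (-(r₀^2/(4*r^2))))]
    -- annulus estimates
    have hAle : ∀ j : ℕ, ∫⁻ x in Aset j, G x ∂μ ≤
        ENNReal.ofReal (Λ * (4*K)^m * Real.exp (-(K^2/4)) * r^m) * (ENNReal.ofReal (1/2))^j := by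
      intro j
      have hminpos : (0:ℝ) < min r₀ (2^(j+2)*(K*r)) := lt_min hr₀ (by positivity)
      have hjm : min r₀ (2^(j+2)*(K*r)) ∈ Set.Ioc (0:ℝ) r₀ := ⟨hminpos, min_le_left _ _⟩
      have hmeas := hball _ hjm
      have hsub : Aset j ⊆ Metric.ball p (min r₀ (2^(j+2)*(K*r))) := Set.inter_subset_right
      have hGb : ∀ x ∈ Aset j, G x ≤ ENNReal.ofReal (Real.exp (-(4^j * K^2/4))) := by
        intro x hxA
        apply ENNReal.ofReal_le_ofReal
        apply Real.exp_le_exp.mpr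
        have h1 : 2^j * (K*r) ≤ ‖x - p‖ := by rw [← dist_eq_norm]; exact hxA.1
        have h2 : ((2:ℝ)^j*(K*r))^2 ≤ ‖x-p‖^2 := pow_le_pow_left₀ (by positivity) h1 2
        have h3 : ((2:ℝ)^j*(K*r))^2 / (4*r^2) = 4^j*K^2/4 := by
          have h4 : ((2:ℝ)^j)^2 = 4^j := by
            rw [← pow_mul, mul_comm j 2, pow_mul]; norm_num
          have hrne : r ≠ 0 := ne_of_gt hr
          rw [mul_pow, h4, mul_pow]
          field_simp
        rw [neg_div]
        apply neg_le_neg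
        rw [← h3]
        gcongr
      have hreal : Real.exp (-(4^j * K^2/4)) * (Λ * (min r₀ (2^(j+2)*(K*r)))^m) ≤
          Λ * (4*K)^m * Real.exp (-(K^2/4)) * r^m * (1/2)^j := by
        have hmin : (min r₀ (2^(j+2)*(K*r)))^m ≤ (2:ℝ)^(j*m) * ((4*K)^m * r^m) := by
          have h1 : (min r₀ (2^(j+2)*(K*r)))^m ≤ ((2:ℝ)^(j+2)*(K*r))^m :=
            pow_le_pow_left₀ hminpos.le (min_le_right _ _) m
          refine h1.trans (le_of_eq ?_)
          rw [show (2:ℝ)^(j+2) = 2^j * 4 by rw [pow_add]; norm_num]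
          rw [show (2:ℝ)^j * 4 * (K*r) = 2^j * ((4*K)*r) by ring]
          rw [mul_pow, mul_pow, ← pow_mul]
        have hgeo := aux_geom K m hKm2 j
        calc Real.exp (-(4^j * K^2/4)) * (Λ * (min r₀ (2^(j+2)*(K*r)))^m)
            ≤ Real.exp (-(4^j * K^2/4)) * (Λ * ((2:ℝ)^(j*m) * ((4*K)^m * r^m))) := by
              apply mul_le_mul_of_nonneg_left _ (Real.exp_pos _).le
              exact mul_le_mul_of_nonneg_left hmin hΛ.le
        _ = (Λ * ((4*K)^m * r^m)) * ((2:ℝ)^(j*m) * Real.exp (-(4^j * K^2/4))) := by ring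
        _ ≤ (Λ * ((4*K)^m * r^m)) * (Real.exp (-(K^2/4)) * (1/2)^j) := by
              apply mul_le_mul_of_nonneg_left hgeo (by positivity)
        _ = Λ * (4*K)^m * Real.exp (-(K^2/4)) * r^m * (1/2)^j := by ring
      calc ∫⁻ x in Aset j, G x ∂μ
          ≤ ∫⁻ _ in Aset j, ENNReal.ofReal (Real.exp (-(4^j * K^2/4))) ∂μ :=
            setLIntegral_mono measurable_const hGb
      _ = ENNReal.ofReal (Real.exp (-(4^j * K^2/4))) * μ (Aset j) := setLIntegral_const _ _
      _ ≤ ENNReal.ofReal (Real.exp (-(4^j * K^2/4))) *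
            ENNReal.ofReal (Λ * (min r₀ (2^(j+2)*(K*r)))^(n-2)) :=
            mul_le_mul_right (le_trans (measure_mono hsub) hmeas) _
      _ = ENNReal.ofReal (Real.exp (-(4^j * K^2/4)) * (Λ * (min r₀ (2^(j+2)*(K*r)))^m)) :=
            (ENNReal.ofReal_mul (Real.exp_pos _).le).symm
      _ ≤ ENNReal.ofReal (Λ * (4*K)^m * Real.exp (-(K^2/4)) * r^m * (1/2)^j) :=
            ENNReal.ofReal_le_ofReal hreal
      _ = ENNReal.ofReal (Λ * (4*K)^m * Real.exp (-(K^2/4)) * r^m) * (ENNReal.ofReal (1/2))^j := by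
            rw [← ENNReal.ofReal_pow (by norm_num), ← ENNReal.ofReal_mul (by positivity)]
    have hhalf : ENNReal.ofReal ((1:ℝ)/2) = 2⁻¹ := by
      rw [one_div, ENNReal.ofReal_inv_of_pos two_pos]
      norm_num
    have hsum : ∑' j, ∫⁻ x in Aset j, G x ∂μ ≤ ENNReal.ofReal (c/8 * r^m) := by
      calc ∑' j, ∫⁻ x in Aset j, G x ∂μ
          ≤ ∑' j : ℕ, ENNReal.ofReal (Λ * (4*K)^m * Real.exp (-(K^2/4)) * r^m) *
              (ENNReal.ofReal (1/2))^j := ENNReal.tsum_le_tsum hAle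
      _ = ENNReal.ofReal (Λ * (4*K)^m * Real.exp (-(K^2/4)) * r^m) *
            ∑' j : ℕ, (ENNReal.ofReal (1/2))^j := ENNReal.tsum_mul_left
      _ = ENNReal.ofReal (Λ * (4*K)^m * Real.exp (-(K^2/4)) * r^m) * 2 := by
            rw [hhalf, ENNReal.tsum_geometric, ENNReal.one_sub_inv_two, inv_inv]
      _ = ENNReal.ofReal (Λ * (4*K)^m * Real.exp (-(K^2/4)) * r^m * 2) := by
            rw [eq_comm, ENNReal.ofReal_mul (by positivity), ENNReal.ofReal_ofNat]
      _ ≤ ENNReal.ofReal (c/8 * r^m) := by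
            apply ENNReal.ofReal_le_ofReal
            have hrm0 : (0:ℝ) ≤ r^m := by positivity
            nlinarith [hKb]
    have hcomp : ∫⁻ x in Bᶜ, G x ∂μ ≤ ENNReal.ofReal (c/4 * r^m) := by
      calc ∫⁻ x in Bᶜ, G x ∂μ ≤ ∫⁻ x in T ∪ ⋃ j, Aset j, G x ∂μ := lintegral_mono_set hcover
      _ ≤ (∫⁻ x in T, G x ∂μ) + ∫⁻ x in ⋃ j, Aset j, G x ∂μ := lintegral_union_le _ _ _
      _ ≤ ENNReal.ofReal (c/8 * r^m) + ∑' j, ∫⁻ x in Aset j, G x ∂μ :=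
            add_le_add hTle (lintegral_iUnion_le _ _)
      _ ≤ ENNReal.ofReal (c/8 * r^m) + ENNReal.ofReal (c/8 * r^m) :=
            add_le_add_right hsum _
      _ = ENNReal.ofReal (c/4 * r^m) := by
            rw [← ENNReal.ofReal_add (by positivity) (by positivity)]
            congr 1; ring
    -- conclude
    have hfinal : ENNReal.ofReal (c/4 * r^m) + ENNReal.ofReal (c/4 * r^m) ≤
        μ B + ENNReal.ofReal (c/4 * r^m) := by
      calc ENNReal.ofReal (c/4 * r^m) + ENNReal.ofReal (c/4 * r^m)
          = ENNReal.ofReal (c/2 * r^m) := by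
            rw [← ENNReal.ofReal_add (by positivity) (by positivity)]
            congr 1; ring
      _ ≤ ∫⁻ x, G x ∂μ := hL_lb
      _ = (∫⁻ x in B, G x ∂μ) + ∫⁻ x in Bᶜ, G x ∂μ := hsplit
      _ ≤ μ B + ENNReal.ofReal (c/4 * r^m) := add_le_add hBle hcomp
    exact (ENNReal.add_le_add_iff_right ENNReal.ofReal_ne_top).mp hfinal
  -- wrap up
  refine ⟨K * min r₂ r₃, mul_pos hK0 (lt_min hr₂0 hr₃0), ?_⟩
  rintro s ⟨hs0, hs1⟩
  have hsK : 0 < s/K := by positivity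
  have hsK2 : s/K < min r₂ r₃ := by
    rw [div_lt_iff₀ hK0]
    calc s < K * min r₂ r₃ := hs1
    _ = min r₂ r₃ * K := mul_comm _ _
  have h := main (s/K) hsK hsK2
  rw [show K * (s/K) = s by field_simp] at h
  refine le_trans (le_of_eq ?_) h
  congr 1
  rw [div_pow]
  field_simp
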